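/- Let $p$ be a prime and consider the $p$ sequences of $\mathcal{C}_0(p, 2p-1)$, each of period $p(2p-1)$. Form a $p \times p(2p-1)$ binary matrix $\mathbf{F}$ whose $i$-th row is an arbitrary cyclic shift of the $i$-th sequence. Then among any $2p$ consecutive columns of $\mathbf{F}$ (indices taken cyclically), at least one column is entirely zero. -/

import Mathlib

/-- Membership in the characteristic set `I_g` of the CRT sequence `S_g`. -/
def igMem (p q g l : ℕ) : Bool :=
  (List.range p).any fun j => decide (l % p = (j * g) % p ∧ l % q = j)

/-- Membership in the characteristic set `I_*` of the sequence `S_*`. -/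
def istarMem (p q l : ℕ) : Bool :=
  (List.range p).any fun j => decide (l % p = j ∧ l % q = 0)

/-- The characteristic function of a member of `C_0(p,q)`: `none` stands for
`S_*` and `some g` for the CRT sequence `S_g`. -/
def c0Mem (p q : ℕ) (o : Option ℕ) (l : ℕ) : Bool :=
  o.elim (istarMem p q l) (fun g => igMem p q g l)

/-- An index is a valid member of `C_0(p,q)` if it is `S_*` or `S_g` with
`g ∈ {0} ∪ {2, …, p-1}`. -/
def c0Valid (p : ℕ) (o : Option ℕ) : Prop :=
  o.elim True (fun g => g = 0 ∨ (2 ≤ g ∧ g < p))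

private lemma igMem_iff {p q g l : ℕ} :
    igMem p q g l = true ↔ ∃ j, j < p ∧ l % p = (j * g) % p ∧ l % q = j := by
  simp [igMem, List.any_eq_true, List.mem_range]

private lemma istarMem_iff {p q l : ℕ} (hp : 0 < p) :
    istarMem p q l = true ↔ l % q = 0 := by
  simp only [istarMem, List.any_eq_true, List.mem_range, decide_eq_true_eq]
  constructor
  · rintro ⟨j, _, _, h⟩; exact h
  · intro h; exact ⟨l % p, Nat.mod_lt _ hp, rfl, h⟩

/-- Two hits of `S_*` in a window of length `2p` are at positions `0` and `2p-1`. -/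
private lemma star_pair {p a t1 t2 : ℕ} (hp2 : 2 ≤ p)
    (e1 : (a + t1) % (2 * p - 1) = 0) (e2 : (a + t2) % (2 * p - 1) = 0)
    (hlt : t1 < t2) (ht2 : t2 < 2 * p) : t1 = 0 ∧ t2 = 2 * p - 1 := by
  have hd : (2 * p - 1) ∣ (t2 - t1) := by
    have h1 := Nat.dvd_sub (Nat.dvd_of_mod_eq_zero e2) (Nat.dvd_of_mod_eq_zero e1)
    have h2 : a + t2 - (a + t1) = t2 - t1 := by omega
    rwa [h2] at h1
  have hle : 2 * p - 1 ≤ t2 - t1 := Nat.le_of_dvd (by omega) hd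
  omega

/-- Common `mod q` step: the `q`-residues of two hits are related by the gap. -/
private lemma q_step {p a t1 t2 j1 j2 : ℕ} (hp2 : 2 ≤ p)
    (hj1 : j1 < p) (hj2 : j2 < p)
    (e1q : (a + t1) % (2 * p - 1) = j1) (e2q : (a + t2) % (2 * p - 1) = j2)
    (hlt : t1 < t2) :
    j2 = (j1 + (t2 - t1)) % (2 * p - 1) := by
  set q := 2 * p - 1 with hq
  have h1 : a + t1 ≡ j1 [MOD q] := by
    show (a + t1) % q = j1 % q
    rw [e1q, Nat.mod_eq_of_lt (by omega)]
  have h2 : j1 + (t2 - t1) ≡ j2 [MOD q] := by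
    calc j1 + (t2 - t1) ≡ (a + t1) + (t2 - t1) [MOD q] := (h1.symm).add_right _
      _ = a + t2 := by omega
      _ ≡ j2 [MOD q] := by
          show (a + t2) % q = j2 % q
          rw [e2q, Nat.mod_eq_of_lt (by omega)]
  have := h2.symm
  unfold Nat.ModEq at this
  rw [Nat.mod_eq_of_lt (by omega)] at this
  exact this

/-- Common `mod p` step. -/
private lemma p_step {p a t1 t2 j1 j2 g : ℕ}
    (e1p : (a + t1) % p = (j1 * g) % p) (e2p : (a + t2) % p = (j2 * g) % p)
    (hlt : t1 ≤ t2) :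
    ((j1 : ZMod p) * g + (t2 - t1 : ℕ) : ZMod p) = (j2 : ZMod p) * g := by
  have key : j1 * g + (t2 - t1) ≡ j2 * g [MOD p] := by
    calc j1 * g + (t2 - t1) ≡ (a + t1) + (t2 - t1) [MOD p] :=
          (Nat.ModEq.symm e1p).add_right _
      _ = a + t2 := by omega
      _ ≡ j2 * g [MOD p] := e2p
  have := (ZMod.natCast_eq_natCast_iff _ _ _).mpr key
  push_cast at this
  exact this

/-- Any two hits of a valid CRT sequence in the window are at least `p` apart. -/
private lemma gap_ge {p g a t1 t2 j1 j2 : ℕ} (hp : p.Prime)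
    (hg : g = 0 ∨ (2 ≤ g ∧ g < p))
    (hj1 : j1 < p) (hj2 : j2 < p)
    (e1p : (a + t1) % p = (j1 * g) % p) (e1q : (a + t1) % (2 * p - 1) = j1)
    (e2p : (a + t2) % p = (j2 * g) % p) (e2q : (a + t2) % (2 * p - 1) = j2)
    (hlt : t1 < t2) (ht2 : t2 < 2 * p) :
    p ≤ t2 - t1 := by
  haveI := Fact.mk hp
  have hp2 := hp.two_le
  by_contra hcon
  push_neg at hcon
  set δ := t2 - t1 with hδ
  have hδ0 : 0 < δ := by omega
  have hjq := q_step hp2 hj1 hj2 e1q e2q hlt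
  rw [Nat.mod_eq_of_lt (by omega)] at hjq
  -- hjq : j2 = j1 + δ
  have hpe := p_step e1p e2p (le_of_lt hlt)
  rw [hjq] at hpe
  push_cast at hpe
  have hzero : ((δ : ZMod p)) * ((g : ZMod p) - 1) = 0 := by
    push_cast at hpe
    linear_combination -hpe
  rcases mul_eq_zero.mp hzero with h | h
  · have : p ∣ δ := (ZMod.natCast_eq_zero_iff _ _).mp h
    have := Nat.le_of_dvd hδ0 this
    omega
  · have hg1 : ((g : ℕ) : ZMod p) = ((1 : ℕ) : ZMod p) := by
      push_cast
      linear_combination h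
    have := (ZMod.natCast_eq_natCast_iff _ _ _).mp hg1
    unfold Nat.ModEq at this
    rw [Nat.mod_eq_of_lt (by omega), Nat.mod_eq_of_lt (by omega)] at this
    omega

/-- Two hits of the special sequence (`S_0` for `p = 2`, `S_2` otherwise) in the
window are exactly `2p - 2` apart. -/
private lemma gap_eq {p g a t1 t2 j1 j2 : ℕ} (hp : p.Prime)
    (hcase : (p = 2 ∧ g = 0) ∨ (3 ≤ p ∧ g = 2))
    (hj1 : j1 < p) (hj2 : j2 < p)
    (e1p : (a + t1) % p = (j1 * g) % p) (e1q : (a + t1) % (2 * p - 1) = j1)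
    (e2p : (a + t2) % p = (j2 * g) % p) (e2q : (a + t2) % (2 * p - 1) = j2)
    (hlt : t1 < t2) (ht2 : t2 < 2 * p) :
    t2 - t1 = 2 * p - 2 := by
  haveI := Fact.mk hp
  have hp2 := hp.two_le
  have hg : g = 0 ∨ (2 ≤ g ∧ g < p) := by rcases hcase with ⟨_, h⟩ | ⟨_, h⟩ <;> omega
  have hge : p ≤ t2 - t1 := gap_ge hp hg hj1 hj2 e1p e1q e2p e2q hlt ht2
  set δ := t2 - t1 with hδ
  have hδlt : δ < 2 * p := by omega
  have hjq := q_step hp2 hj1 hj2 e1q e2q hlt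
  -- j1 + δ ≥ q, for otherwise j2 = j1 + δ ≥ p
  have hqle : 2 * p - 1 ≤ j1 + δ := by
    by_contra hc
    push_neg at hc
    rw [Nat.mod_eq_of_lt hc] at hjq
    omega
  rw [Nat.mod_eq_sub_mod hqle, Nat.mod_eq_of_lt (by omega)] at hjq
  -- j1 + δ = j2 + (2p - 1) in ℕ
  have hnat : j1 + δ = j2 + (2 * p - 1) := by omega
  have hpe := p_step e1p e2p (le_of_lt hlt)
  -- cast hnat into ZMod p
  have hcast : ((j1 : ZMod p)) + (δ : ℕ) = (j2 : ZMod p) + ((2 * p - 1 : ℕ) : ZMod p) := by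
    exact_mod_cast congrArg (Nat.cast : ℕ → ZMod p) hnat
  have hq1 : ((2 * p - 1 : ℕ) : ZMod p) = -1 := by
    have h2p : ((2 * p - 1 : ℕ) : ZMod p) + ((1 : ℕ) : ZMod p) = ((2 * p : ℕ) : ZMod p) := by
      rw [← Nat.cast_add]
      congr 1
      omega
    have hz : ((2 * p : ℕ) : ZMod p) = 0 := by
      push_cast
      simp [ZMod.natCast_self]
    rw [hz] at h2p
    push_cast at h2p
    linear_combination h2p
  rw [hq1] at hcast
  -- hcast : j1 + δ = j2 - 1, i.e. j2 = j1 + δ + 1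
  rcases hcase with ⟨hp2', hg0⟩ | ⟨hp3, hg2⟩
  · -- p = 2, g = 0 : δ ≡ 0 mod 2
    subst hg0
    have hD : ((δ : ℕ) : ZMod p) = 0 := by push_cast at hpe ⊢; linear_combination hpe
    have hdvd : p ∣ δ := (ZMod.natCast_eq_zero_iff _ _).mp hD
    obtain ⟨k, hk⟩ := hdvd
    subst hp2'
    omega
  · -- p ≥ 3, g = 2 : δ + 2 ≡ 0 mod p
    subst hg2
    have hD : ((δ + 2 : ℕ) : ZMod p) = 0 := by
      push_cast at hpe hcast ⊢
      linear_combination 2 * hcast - hpe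
    have hdvd : p ∣ δ + 2 := (ZMod.natCast_eq_zero_iff _ _).mp hD
    obtain ⟨k, hk⟩ := hdvd
    have hkge : 2 ≤ k := by
      by_contra hc
      push_neg at hc
      interval_cases k <;> omega
    have hkle : k ≤ 2 := by
      by_contra hc
      push_neg at hc
      have h3 : p * 3 ≤ p * k := Nat.mul_le_mul_left p (by omega)
      omega
    have hk2 : k = 2 := by omega
    rw [hk2] at hk
    omega

/-- A subset of the window whose elements are pairwise at least `p` apart has at
most two elements. -/
private lemma card_le_two {p : ℕ} (hp : 0 < p) (T : Finset ℕ)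
    (hsub : ∀ t ∈ T, t < 2 * p)
    (hgap : ∀ t1 ∈ T, ∀ t2 ∈ T, t1 < t2 → p ≤ t2 - t1) :
    T.card ≤ 2 := by
  have key : ∀ a ∈ T, ∀ b ∈ T, a < b → a / p < b / p := by
    intro a ha b hb hab
    have hpa := hgap a ha b hb hab
    have : a + p ≤ b := by omega
    calc a / p < a / p + 1 := Nat.lt_succ_self _
      _ = (a + p) / p := by rw [Nat.add_div_right _ hp]
      _ ≤ b / p := Nat.div_le_div_right this
  have : T.card ≤ (Finset.range 2).card := by
    apply Finset.card_le_card_of_injOn (fun t => t / p)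
    · intro t ht
      simp only [Finset.coe_range, Set.mem_Iio, Finset.mem_range]
      exact Nat.div_lt_of_lt_mul (by have := hsub t ht; omega)
    · intro t1 h1 t2 h2 heq
      by_contra hne
      rcases Nat.lt_or_ge t1 t2 with h | h
      · exact absurd heq (Nat.ne_of_lt (key t1 h1 t2 h2 h))
      · have h' : t2 < t1 := by omega
        exact absurd heq.symm (Nat.ne_of_lt (key t2 h2 t1 h1 h'))
  simpa using this

/-- Shift each of the `p` sequences of `C_0(p, 2p-1)` cyclically by an arbitrary
amount `s o`, and stack them as the rows of a `p × p(2p-1)` matrix `F` (the entry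
of row `o` in column `m` being the value of the shifted sequence at `m`).  Then
among any `2p` consecutive columns of `F` (taken cyclically) at least one column
is entirely zero. -/
theorem c0_zero_column_in_window (p : ℕ) (hp : p.Prime) (s : Option ℕ → ℕ)
    (c : ℕ) :
    ∃ t < 2 * p, ∀ o : Option ℕ, c0Valid p o →
      c0Mem p (2 * p - 1) o ((c + t + s o) % (p * (2 * p - 1))) = false := by
  have hp2 := hp.two_le
  by_contra hcon
  push_neg at hcon
  set q : ℕ := 2 * p - 1 with hq
  set N : ℕ := p * (2 * p - 1) with hN
  set T : Option ℕ → Finset ℕ := fun o =>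
    (Finset.range (2 * p)).filter
      (fun t => c0Mem p (2 * p - 1) o ((c + t + s o) % N) = true) with hT
  have hTlt : ∀ o, ∀ t ∈ T o, t < 2 * p := by
    intro o t ht
    exact Finset.mem_range.mp (Finset.mem_filter.mp ht).1
  have hpdvd : p ∣ N := ⟨2 * p - 1, rfl⟩
  have hqdvd : q ∣ N := ⟨p, by rw [hN, hq]; ring⟩
  -- star hits
  have hstar : ∀ t ∈ T none, (c + s none + t) % q = 0 := by
    intro t ht
    have h := (Finset.mem_filter.mp ht).2
    simp only [c0Mem, Option.elim] at h
    rw [istarMem_iff (by omega)] at h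
    rw [Nat.mod_mod_of_dvd _ hqdvd] at h
    rwa [show c + t + s none = c + s none + t by ring] at h
  -- CRT hits
  have hgmem : ∀ g, ∀ t ∈ T (some g), ∃ j, j < p ∧
      (c + s (some g) + t) % p = (j * g) % p ∧ (c + s (some g) + t) % q = j := by
    intro g t ht
    have h := (Finset.mem_filter.mp ht).2
    simp only [c0Mem, Option.elim] at h
    rw [igMem_iff] at h
    obtain ⟨j, hj, h1, h2⟩ := h
    rw [Nat.mod_mod_of_dvd _ hpdvd] at h1
    rw [Nat.mod_mod_of_dvd _ hqdvd] at h2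
    rw [show c + t + s (some g) = c + s (some g) + t by ring] at h1 h2
    exact ⟨j, hj, h1, h2⟩
  -- gap property
  have hgapo : ∀ o, c0Valid p o → ∀ t1 ∈ T o, ∀ t2 ∈ T o, t1 < t2 → p ≤ t2 - t1 := by
    intro o hv t1 h1 t2 h2 hlt
    match o with
    | none =>
        obtain ⟨ha, hb⟩ := star_pair hp2 (hstar t1 h1) (hstar t2 h2) hlt (hTlt none t2 h2)
        omega
    | some g =>
        obtain ⟨j1, hj1, e1p, e1q⟩ := hgmem g t1 h1
        obtain ⟨j2, hj2, e2p, e2q⟩ := hgmem g t2 h2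
        exact gap_ge hp hv hj1 hj2 e1p e1q e2p e2q hlt (hTlt _ t2 h2)
  have hcard : ∀ o, c0Valid p o → (T o).card ≤ 2 := by
    intro o hv
    exact card_le_two (by omega) (T o) (hTlt o) (hgapo o hv)
  -- the special row
  set gs : ℕ := if p = 2 then 0 else 2 with hgs
  have hgv : c0Valid p (some gs) := by
    simp only [c0Valid, Option.elim]
    rw [hgs]
    split_ifs with h
    · left; rfl
    · right; omega
  set S : Finset ℕ := (Finset.range p).erase 1 with hS
  have hgsS : gs ∈ S := by
    rw [hS]
    refine Finset.mem_erase.mpr ⟨?_, Finset.mem_range.mpr ?_⟩ <;>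
      rw [hgs] <;> split_ifs with h <;> omega
  have hvalid_of_S : ∀ g ∈ S, c0Valid p (some g) := by
    intro g hg
    rw [hS] at hg
    simp only [Finset.mem_erase, Finset.mem_range] at hg
    simp only [c0Valid, Option.elim]
    omega
  -- coverage
  have hcover : ∀ t < 2 * p, t ∈ T none ∨ ∃ g ∈ S, t ∈ T (some g) := by
    intro t ht
    obtain ⟨o, hv, hm⟩ := hcon t ht
    rw [Bool.ne_false_iff] at hm
    match o with
    | none =>
        left
        exact Finset.mem_filter.mpr ⟨Finset.mem_range.mpr ht, hm⟩
    | some g =>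
        right
        refine ⟨g, ?_, Finset.mem_filter.mpr ⟨Finset.mem_range.mpr ht, hm⟩⟩
        simp only [c0Valid, Option.elim] at hv
        rw [hS]
        simp only [Finset.mem_erase, Finset.mem_range]
        omega
  -- key union bound
  set U : Finset ℕ := (T none ∪ T (some gs)) ∪ (S.erase gs).biUnion (fun g => T (some g))
    with hU
  have hsubU : Finset.range (2 * p) ⊆ U := by
    intro t ht
    have ht' := Finset.mem_range.mp ht
    rcases hcover t ht' with h | ⟨g, hgS', hgt⟩
    · exact Finset.mem_union_left _ (Finset.mem_union_left _ h)
    · by_cases hgg : g = gs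
      · subst hgg
        exact Finset.mem_union_left _ (Finset.mem_union_right _ hgt)
      · refine Finset.mem_union_right _ (Finset.mem_biUnion.mpr ⟨g, ?_, hgt⟩)
        exact Finset.mem_erase.mpr ⟨hgg, hgS'⟩
  -- card of the tail
  have hScard : (S.erase gs).card = p - 2 := by
    rw [Finset.card_erase_of_mem hgsS, hS,
      Finset.card_erase_of_mem (by simp [Finset.mem_range]; omega), Finset.card_range]
    omega
  have htail : ((S.erase gs).biUnion (fun g => T (some g))).card ≤ 2 * (p - 2) := by
    calc ((S.erase gs).biUnion (fun g => T (some g))).card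
        ≤ ∑ g ∈ S.erase gs, (T (some g)).card := Finset.card_biUnion_le
      _ ≤ (S.erase gs).card * 2 := by
          apply Finset.sum_le_card_nsmul
          intro g hg
          exact hcard (some g) (hvalid_of_S g (Finset.mem_of_mem_erase hg))
      _ = 2 * (p - 2) := by rw [hScard]; ring
  -- head bound
  have hhead : (T none ∪ T (some gs)).card ≤ 3 := by
    have hcn : (T none).card ≤ 2 := hcard none trivial
    have hcg : (T (some gs)).card ≤ 2 := hcard (some gs) hgv
    by_cases h2n : (T none).card = 2
    · by_cases h2g : (T (some gs)).card = 2
      · -- both have two hits: they must intersect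
        obtain ⟨a, b, hab, hTn⟩ := Finset.card_eq_two.mp h2n
        obtain ⟨a', b', hab', hTg⟩ := Finset.card_eq_two.mp h2g
        have haT : a ∈ T none := by rw [hTn]; simp
        have hbT : b ∈ T none := by rw [hTn]; simp
        have haT' : a' ∈ T (some gs) := by rw [hTg]; simp
        have hbT' : b' ∈ T (some gs) := by rw [hTg]; simp
        -- wlog a < b
        have hstar2 : 0 ∈ T none ∧ (2 * p - 1) ∈ T none := by
          rcases Nat.lt_or_ge a b with h | h
          · obtain ⟨h0, h1⟩ := star_pair hp2 (hstar a haT) (hstar b hbT) h (hTlt none b hbT)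
            constructor
            · rwa [h0] at haT
            · rwa [h1] at hbT
          · have h' : b < a := by omega
            obtain ⟨h0, h1⟩ := star_pair hp2 (hstar b hbT) (hstar a haT) h' (hTlt none a haT)
            constructor
            · rwa [h0] at hbT
            · rwa [h1] at haT
        have hcase : (p = 2 ∧ gs = 0) ∨ (3 ≤ p ∧ gs = 2) := by
          rw [hgs]; split_ifs with h
          · left; exact ⟨h, rfl⟩
          · right; exact ⟨by omega, rfl⟩
        have hgs2 : ∃ u, u ∈ T (some gs) ∧ (u + (2 * p - 2)) ∈ T (some gs) ∧ u ≤ 1 := by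
          rcases Nat.lt_or_ge a' b' with h | h
          · obtain ⟨j1, hj1, e1p, e1q⟩ := hgmem gs a' haT'
            obtain ⟨j2, hj2, e2p, e2q⟩ := hgmem gs b' hbT'
            have := gap_eq hp hcase hj1 hj2 e1p e1q e2p e2q h (hTlt _ b' hbT')
            have hb2 := hTlt _ b' hbT'
            refine ⟨a', haT', ?_, by omega⟩
            have : b' = a' + (2 * p - 2) := by omega
            rwa [← this]
          · have h' : b' < a' := by omega
            obtain ⟨j1, hj1, e1p, e1q⟩ := hgmem gs b' hbT'
            obtain ⟨j2, hj2, e2p, e2q⟩ := hgmem gs a' haT'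
            have := gap_eq hp hcase hj1 hj2 e1p e1q e2p e2q h' (hTlt _ a' haT')
            have hb2 := hTlt _ a' haT'
            refine ⟨b', hbT', ?_, by omega⟩
            have : a' = b' + (2 * p - 2) := by omega
            rwa [← this]
        obtain ⟨u, huT, huT2, hu1⟩ := hgs2
        have hinter : (T none ∩ T (some gs)).Nonempty := by
          rcases Nat.eq_zero_or_pos u with h0 | h0
          · exact ⟨0, Finset.mem_inter.mpr ⟨hstar2.1, h0 ▸ huT⟩⟩
          · have hu : u = 1 := by omega
            have : u + (2 * p - 2) = 2 * p - 1 := by omega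
            exact ⟨2 * p - 1, Finset.mem_inter.mpr ⟨hstar2.2, this ▸ huT2⟩⟩
        have hic : 1 ≤ (T none ∩ T (some gs)).card := Finset.card_pos.mpr hinter
        have := Finset.card_union_add_card_inter (T none) (T (some gs))
        omega
      · have := Finset.card_union_le (T none) (T (some gs))
        omega
    · have := Finset.card_union_le (T none) (T (some gs))
      omega
  -- final counting
  have hfinal : 2 * p ≤ U.card := by
    calc 2 * p = (Finset.range (2 * p)).card := (Finset.card_range _).symm
      _ ≤ U.card := Finset.card_le_card hsubU
  have hUle : U.card ≤ 3 + 2 * (p - 2) := by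
    calc U.card ≤ (T none ∪ T (some gs)).card
          + ((S.erase gs).biUnion (fun g => T (some g))).card :=
        Finset.card_union_le _ _
      _ ≤ 3 + 2 * (p - 2) := by omega
  omega
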